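/- Let t ≥ 200 be an integer, let p be real with 1/(t+1) ≤ p ≤ 2/(t+3), and let s and s' be integers with 0 ≤ s' ≤ s, s ≥ 10 and t − s + s' ≥ 1. Then f(t−s+s', s, p)·f(t+s−s', s', p) < 0.99·((t+2)·p^{t+1}·q + p^{t+2})², where q := 1 − p. -/

import Mathlib

open Finset

open scoped Classical

noncomputable section

/-- The `p`-weight of a family of subsets of `[n] = {1,…,n}`. -/
def mu (n : ℕ) (p : ℝ) (𝓕 : Finset (Finset ℕ)) : ℝ :=
  ∑ F ∈ 𝓕, p ^ F.card * (1 - p) ^ (n - F.card)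

/-- Two families are cross `t`-intersecting. -/
def CrossIntersecting (t : ℕ) (𝓐 𝓑 : Finset (Finset ℕ)) : Prop :=
  ∀ A ∈ 𝓐, ∀ B ∈ 𝓑, t ≤ (A ∩ B).card

/-- The Frankl family `F_i^ℓ = {F ⊆ [n] : |F ∩ [ℓ+2i]| ≥ ℓ+i}`. -/
def FF (n ℓ i : ℕ) : Finset (Finset ℕ) :=
  (Finset.Icc 1 n).powerset.filter fun F => ℓ + i ≤ (F ∩ Finset.Icc 1 (ℓ + 2 * i)).card

/-- `F` reaches level `ℓ`: there is `0 ≤ j ≤ n` with `2|F ∩ [j]| ≥ j + ℓ`. -/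
def Reaches (n ℓ : ℕ) (F : Finset ℕ) : Prop :=
  ∃ j ≤ n, j + ℓ ≤ 2 * (F ∩ Finset.Icc 1 j).card

/-- The number of steps `0 ≤ j ≤ n` at which `F` hits level `ℓ`, i.e. `2|F ∩ [j]| = j + ℓ`. -/
def hitCount (n ℓ : ℕ) (F : Finset ℕ) : ℕ :=
  ((Finset.range (n + 1)).filter fun j => 2 * (F ∩ Finset.Icc 1 j).card = j + ℓ).card

/-- `F^ℓ`: all subsets of `[n]` reaching level `ℓ`. -/
def Fwalk (n ℓ : ℕ) : Finset (Finset ℕ) :=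
  (Finset.Icc 1 n).powerset.filter fun F => Reaches n ℓ F

/-- `tilde F^ℓ`: all subsets of `[n]` reaching level `ℓ+1`. -/
def Ftilde (n ℓ : ℕ) : Finset (Finset ℕ) :=
  (Finset.Icc 1 n).powerset.filter fun F => Reaches n (ℓ + 1) F

/-- `hat F^ℓ`: subsets not reaching level `ℓ+1` and hitting level `ℓ` exactly once. -/
def Fhat (n ℓ : ℕ) : Finset (Finset ℕ) :=
  (Finset.Icc 1 n).powerset.filter fun F => ¬ Reaches n (ℓ + 1) F ∧ hitCount n ℓ F = 1

/-- `ddot F^ℓ`: subsets not reaching level `ℓ+1` and hitting level `ℓ` at least twice. -/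
def Fddot (n ℓ : ℕ) : Finset (Finset ℕ) :=
  (Finset.Icc 1 n).powerset.filter fun F => ¬ Reaches n (ℓ + 1) F ∧ 2 ≤ hitCount n ℓ F

/-- The `(i,j)`-shift of a single set `F`, relative to the family `𝓕`. -/
def shiftSet (i j : ℕ) (𝓕 : Finset (Finset ℕ)) (F : Finset ℕ) : Finset ℕ :=
  if j ∈ F ∧ i ∉ F ∧ insert i (F.erase j) ∉ 𝓕 then insert i (F.erase j) else F

/-- The `(i,j)`-shift `s_{ij}(𝓕)` of a family `𝓕`. -/
def shiftFam (i j : ℕ) (𝓕 : Finset (Finset ℕ)) : Finset (Finset ℕ) :=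
  𝓕.image (shiftSet i j 𝓕)

/-- A family is shifted if all shifts `s_{ij}`, `1 ≤ i < j ≤ n`, fix it. -/
def Shifted (n : ℕ) (𝓕 : Finset (Finset ℕ)) : Prop :=
  ∀ i j : ℕ, 1 ≤ i → i < j → j ≤ n → shiftFam i j 𝓕 = 𝓕

/-- A family of subsets of `[n]` is inclusion maximal. -/
def InclMax (n : ℕ) (𝓕 : Finset (Finset ℕ)) : Prop :=
  ∀ F ∈ 𝓕, ∀ F' : Finset ℕ, F ⊆ F' → F' ⊆ Finset.Icc 1 n → F' ∈ 𝓕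

/-- `λ(𝓕)`: the largest `λ ≥ 0` such that every member of `𝓕` reaches level `λ`. -/
def lam (n : ℕ) (𝓕 : Finset (Finset ℕ)) : ℕ :=
  Nat.findGreatest (fun ℓ => ∀ F ∈ 𝓕, Reaches n ℓ F) n

/-- Two families of subsets of `[n]` are isomorphic via a permutation of `[n]`. -/
def Isom (n : ℕ) (𝓖₁ 𝓖₂ : Finset (Finset ℕ)) : Prop :=
  ∃ σ : Equiv.Perm ℕ, (∀ k ∈ Finset.Icc 1 n, σ k ∈ Finset.Icc 1 n) ∧
    𝓖₁ = 𝓖₂.image fun G => G.image σ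

/-- The quantity `f(ℓ, i, p)` from Ahlswede–Khachatrian type estimates. -/
def fLP (ℓ i : ℕ) (p : ℝ) : ℝ :=
  (p / (1 - p)) ^ (ℓ + 1) +
    (Nat.choose (ℓ + 2 * i) i : ℝ) * ((ℓ + 1 : ℝ) / (ℓ + i + 1)) * p ^ (ℓ + i) *
      (1 - p) ^ i * (1 - p / (1 - p))

/-- The walk `D_s^t(i) = [t−1] ∪ {t+s,…,t+2s} ∪ {t+2s+i+2k : k ≥ 1} ∩ [n]`. -/
def DD (n t s i : ℕ) : Finset ℕ :=
  Finset.Icc 1 (t - 1) ∪ Finset.Icc (t + s) (t + 2 * s) ∪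
    ((Finset.Icc 1 n).filter fun m => ∃ k ∈ Finset.Icc 1 n, m = t + 2 * s + i + 2 * k)

end


private lemma binom_term_le_one' (n k : ℕ) (hk : k ≤ n) {p : ℝ} (hp0 : 0 ≤ p) (hp1 : p ≤ 1) :
    (n.choose k : ℝ) * p ^ k * (1 - p) ^ (n - k) ≤ 1 := by
  have hq0 : (0:ℝ) ≤ 1 - p := by linarith
  have h1 := add_pow p (1 - p) n
  have hpq : p + (1 - p) = 1 := by ring
  rw [hpq, one_pow] at h1
  calc (n.choose k : ℝ) * p ^ k * (1 - p) ^ (n - k)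
      = p ^ k * (1 - p) ^ (n - k) * (n.choose k : ℝ) := by ring
    _ ≤ ∑ m ∈ Finset.range (n + 1), p ^ m * (1 - p) ^ (n - m) * (n.choose m : ℝ) := by
        refine Finset.single_le_sum (f := fun m => p ^ m * (1 - p) ^ (n - m) * (n.choose m : ℝ))
          (fun i _ => ?_) (Finset.mem_range.mpr (Nat.lt_succ_of_le hk))
        have hc : (0:ℝ) ≤ (n.choose i : ℝ) := by positivity
        exact mul_nonneg (mul_nonneg (pow_nonneg hp0 _) (pow_nonneg hq0 _)) hc
    _ = 1 := h1.symm

private lemma choose_mul_pow_le' (N s : ℕ) (hs : 10 ≤ s) {p : ℝ} (hp : 0 ≤ p)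
    (hN : (N : ℝ) * p ≤ 2 + 4 * s / 203) :
    (N.choose s : ℝ) * p ^ s ≤ 0.007 := by
  have hs10 : (10:ℝ) ≤ (s:ℝ) := by exact_mod_cast hs
  have hs0 : (0:ℝ) < (s:ℝ) := by linarith
  have hfac : (0:ℝ) < (Nat.factorial s : ℝ) := by exact_mod_cast Nat.factorial_pos s
  have h1 : (N.choose s : ℝ) ≤ ((N:ℝ)) ^ s / (Nat.factorial s : ℝ) := by
    have h := Nat.choose_le_pow_div (α := ℝ) s N
    push_cast at h
    exact h
  have h2 : (N.choose s : ℝ) * p ^ s ≤ ((N:ℝ) * p) ^ s / (Nat.factorial s : ℝ) := by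
    calc (N.choose s : ℝ) * p ^ s ≤ ((N:ℝ)) ^ s / (Nat.factorial s : ℝ) * p ^ s :=
          mul_le_mul_of_nonneg_right h1 (pow_nonneg hp s)
      _ = ((N:ℝ) * p) ^ s / (Nat.factorial s : ℝ) := by rw [mul_pow]; ring
  have hy0 : (0:ℝ) ≤ 2 + 4 * (s:ℝ) / 203 := by positivity
  have h3 : ((N:ℝ) * p) ^ s ≤ (2 + 4 * (s:ℝ) / 203) ^ s :=
    pow_le_pow_left₀ (mul_nonneg (Nat.cast_nonneg N) hp) hN s
  have hss : (s:ℝ) ^ s ≤ Real.exp s * (Nat.factorial s : ℝ) := by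
    have h := Real.pow_div_factorial_le_exp (x := (s:ℝ)) hs0.le s
    rw [div_le_iff₀ hfac] at h
    exact h
  have h4 : (2 + 4 * (s:ℝ) / 203) ^ s / (Nat.factorial s : ℝ) ≤
      ((2 + 4 * (s:ℝ) / 203) * Real.exp 1 / s) ^ s := by
    rw [div_pow, mul_pow, div_le_div_iff₀ hfac (pow_pos hs0 s)]
    have hy : (0:ℝ) ≤ (2 + 4 * (s:ℝ) / 203) ^ s := pow_nonneg hy0 s
    have hexp : Real.exp 1 ^ s = Real.exp s := by
      rw [← Real.exp_nat_mul]; norm_num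
    calc (2 + 4 * (s:ℝ) / 203) ^ s * (s:ℝ) ^ s
        ≤ (2 + 4 * (s:ℝ) / 203) ^ s * (Real.exp s * (Nat.factorial s : ℝ)) :=
          mul_le_mul_of_nonneg_left hss hy
      _ = (2 + 4 * (s:ℝ) / 203) ^ s * Real.exp 1 ^ s * (Nat.factorial s : ℝ) := by
          rw [hexp]; ring
  have h5 : (2 + 4 * (s:ℝ) / 203) * Real.exp 1 / s ≤ 0.6 := by
    rw [div_le_iff₀ hs0]
    have hE := Real.exp_one_lt_d9
    have hEs : (s:ℝ) * Real.exp 1 ≤ (s:ℝ) * 2.7182818286 :=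
      mul_le_mul_of_nonneg_left hE.le (by linarith)
    linarith [hEs, hE.le]
  have h6 : ((2 + 4 * (s:ℝ) / 203) * Real.exp 1 / s) ^ s ≤ (0.6:ℝ) ^ s :=
    pow_le_pow_left₀ (by positivity) h5 s
  have h7 : (0.6:ℝ) ^ s ≤ (0.6:ℝ) ^ 10 := pow_le_pow_of_le_one (by norm_num) (by norm_num) hs
  have h8 : (0.6:ℝ) ^ 10 ≤ 0.007 := by norm_num
  have h35 : ((N:ℝ) * p) ^ s / (Nat.factorial s : ℝ) ≤
      (2 + 4 * (s:ℝ) / 203) ^ s / (Nat.factorial s : ℝ) := by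
    exact (div_le_div_iff_of_pos_right hfac).mpr h3
  linarith

set_option maxHeartbeats 2000000 in
/-- the bound `g(s,s') < 0.99 (μ_p(F_1^t))²` for `s ≥ 10`. -/
theorem statement_12 (t : ℕ) (ht : 200 ≤ t) (p : ℝ)
    (hp1 : 1 / ((t : ℝ) + 1) ≤ p) (hp2 : p ≤ 2 / ((t : ℝ) + 3))
    (s s' : ℕ) (hs' : s' ≤ s) (hs : 10 ≤ s) (hts : 1 ≤ t + s' - s) :
    fLP (t + s' - s) s p * fLP (t + s - s') s' p <
      0.99 * (((t : ℝ) + 2) * p ^ (t + 1) * (1 - p) + p ^ (t + 2)) ^ 2 := by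
  have hT : (200:ℝ) ≤ (t:ℝ) := by exact_mod_cast ht
  have ht1 : (0:ℝ) < (t:ℝ) + 1 := by linarith
  have ht3 : (0:ℝ) < (t:ℝ) + 3 := by linarith
  have hp0 : 0 < p := lt_of_lt_of_le (by positivity) hp1
  have hpt3 : p * ((t:ℝ) + 3) ≤ 2 := by rw [le_div_iff₀ ht3] at hp2; exact hp2
  have hp203 : 203 * p ≤ 2 := by linarith [hpt3, mul_nonneg hp0.le (by linarith : (0:ℝ) ≤ (t:ℝ) - 200)]
  have hq0 : (0:ℝ) < 1 - p := by linarith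
  have hq1 : 1 - p ≤ 1 := by linarith
  have hαnn : 0 ≤ p / (1 - p) := div_nonneg hp0.le hq0.le
  have hα1 : p / (1 - p) ≤ 1 := by rw [div_le_one hq0]; linarith
  have hm0 : 0 ≤ 1 - p / (1 - p) := by linarith
  have hm1 : 1 - p / (1 - p) ≤ 1 := by linarith
  have h1p : 1 ≤ ((t:ℝ) + 1) * p := by rw [div_le_iff₀ ht1] at hp1; linarith
  have hiq1 : 1 ≤ 1 / (1 - p) := by rw [le_div_iff₀ hq0]; linarith
  have hqlow : ((t:ℝ) + 1) ≤ ((t:ℝ) + 3) * (1 - p) := by linarith [hpt3]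
  have hiq2 : 1 / (1 - p) ≤ 1 + 2 / ((t:ℝ) + 1) := by
    have h13 : 1 + 2 / ((t:ℝ) + 1) = ((t:ℝ) + 3) / ((t:ℝ) + 1) := by
      rw [eq_div_iff (ne_of_gt ht1)]
      field_simp
      ring
    rw [h13, div_le_div_iff₀ hq0 ht1]
    linarith
  have hbeta : (1 / (1 - p)) ^ (2 * t + 2) ≤ 55 := by
    have hstep : (1 / (1 - p)) ^ (2 * t + 2) ≤ (1 + 2 / ((t:ℝ) + 1)) ^ (2 * t + 2) :=
      pow_le_pow_left₀ (by positivity) hiq2 _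
    have hexp1 : (1 + 2 / ((t:ℝ) + 1)) ≤ Real.exp (2 / ((t:ℝ) + 1)) := by
      have := Real.add_one_le_exp (2 / ((t:ℝ) + 1)); linarith
    have hstep2 : (1 + 2 / ((t:ℝ) + 1)) ^ (2 * t + 2) ≤ Real.exp (2 / ((t:ℝ) + 1)) ^ (2 * t + 2) :=
      pow_le_pow_left₀ (by positivity) hexp1 _
    have hstep3 : Real.exp (2 / ((t:ℝ) + 1)) ^ (2 * t + 2) = Real.exp 4 := by
      rw [← Real.exp_nat_mul]
      congr 1
      push_cast
      field_simp
      ring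
    have hstep4 : Real.exp 4 ≤ 55 := by
      have h1 : Real.exp 4 = Real.exp 1 ^ 4 := by
        rw [← Real.exp_nat_mul]; norm_num
      have h2 : Real.exp 1 ^ 4 ≤ (2.7182818286:ℝ) ^ 4 :=
        pow_le_pow_left₀ (Real.exp_pos 1).le Real.exp_one_lt_d9.le 4
      rw [h1]; refine h2.trans (by norm_num)
    calc (1 / (1 - p)) ^ (2 * t + 2) ≤ (1 + 2 / ((t:ℝ) + 1)) ^ (2 * t + 2) := hstep
      _ ≤ Real.exp (2 / ((t:ℝ) + 1)) ^ (2 * t + 2) := hstep2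
      _ = Real.exp 4 := hstep3
      _ ≤ 55 := hstep4
  have hβmono : ∀ m : ℕ, m ≤ 2 * t + 2 → (1 / (1 - p)) ^ m ≤ 55 := fun m hm =>
    le_trans (pow_le_pow_right₀ hiq1 hm) hbeta
  set L1 := t + s' - s with hL1def
  set L2 := t + s - s' with hL2def
  have hL1t : (L1:ℝ) ≤ (t:ℝ) := by
    have : L1 ≤ t := by omega
    exact_mod_cast this
  have h2t2 : L1 + 1 + (L2 + 1) = 2 * t + 2 := by omega
  have h2t1 : L1 + 1 + L2 = 2 * t + 1 := by omega
  have h2t1' : L1 + (L2 + 1) = 2 * t + 1 := by omega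
  have h2t0 : L1 + L2 = 2 * t := by omega
  -- B1 bound
  have hs10 : (10:ℝ) ≤ (s:ℝ) := by exact_mod_cast hs
  have hNb : ((L1 + 2 * s : ℕ) : ℝ) * p ≤ 2 + 4 * (s:ℝ) / 203 := by
    have hcast : ((L1 + 2 * s : ℕ) : ℝ) ≤ (t:ℝ) + 2 * (s:ℝ) := by push_cast; linarith
    have hsp : (s:ℝ) * (203 * p) ≤ (s:ℝ) * 2 := mul_le_mul_of_nonneg_left hp203 (by linarith)
    have hc := mul_le_mul_of_nonneg_right hcast hp0.le
    linarith [hc, hsp, hpt3, hp0.le]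
  have hchoose1 : (Nat.choose (L1 + 2 * s) s : ℝ) * p ^ s ≤ 0.007 :=
    choose_mul_pow_le' (L1 + 2 * s) s hs hp0.le hNb
  have hr1nn : 0 ≤ ((L1:ℝ) + 1) / ((L1:ℝ) + (s:ℝ) + 1) := by positivity
  have hr1 : ((L1:ℝ) + 1) / ((L1:ℝ) + (s:ℝ) + 1) ≤ 1 := by
    rw [div_le_one (by positivity)]
    have : (0:ℝ) ≤ (s:ℝ) := Nat.cast_nonneg s
    linarith
  have hB1pack : ∃ b1 : ℝ, fLP L1 s p = (p / (1 - p)) ^ (L1 + 1) + b1 ∧ 0 ≤ b1 ∧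
      b1 ≤ 0.007 * p ^ L1 := by
    refine ⟨(Nat.choose (L1 + 2 * s) s : ℝ) * ((L1 + 1 : ℝ) / (L1 + s + 1)) * p ^ (L1 + s) *
      (1 - p) ^ s * (1 - p / (1 - p)), rfl, ?_, ?_⟩
    · have c0 : (0:ℝ) ≤ (Nat.choose (L1 + 2 * s) s : ℝ) := Nat.cast_nonneg _
      exact mul_nonneg (mul_nonneg (mul_nonneg (mul_nonneg c0 hr1nn)
        (pow_nonneg hp0.le _)) (pow_nonneg hq0.le _)) hm0
    · have hqs : (1 - p) ^ s ≤ 1 := pow_le_one₀ hq0.le hq1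
      have hqm : (1 - p) ^ s * (1 - p / (1 - p)) ≤ 1 := mul_le_one₀ hqs hm0 hm1
      have hqmnn : 0 ≤ (1 - p) ^ s * (1 - p / (1 - p)) :=
        mul_nonneg (pow_nonneg hq0.le s) hm0
      have hcp : 0 ≤ (Nat.choose (L1 + 2 * s) s : ℝ) * p ^ (L1 + s) :=
        mul_nonneg (Nat.cast_nonneg _) (pow_nonneg hp0.le _)
      calc (Nat.choose (L1 + 2 * s) s : ℝ) * ((L1 + 1 : ℝ) / (L1 + s + 1)) * p ^ (L1 + s) *
            (1 - p) ^ s * (1 - p / (1 - p))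
          = ((Nat.choose (L1 + 2 * s) s : ℝ) * p ^ (L1 + s)) *
            (((L1:ℝ) + 1) / ((L1:ℝ) + (s:ℝ) + 1) * ((1 - p) ^ s * (1 - p / (1 - p)))) := by
            push_cast; ring
        _ ≤ ((Nat.choose (L1 + 2 * s) s : ℝ) * p ^ (L1 + s)) * 1 :=
            mul_le_mul_of_nonneg_left (mul_le_one₀ hr1 hqmnn hqm) hcp
        _ = ((Nat.choose (L1 + 2 * s) s : ℝ) * p ^ s) * p ^ L1 := by rw [pow_add]; ring
        _ ≤ 0.007 * p ^ L1 := mul_le_mul_of_nonneg_right hchoose1 (pow_nonneg hp0.le _)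
  -- B2 bound
  have hr2nn : 0 ≤ ((L2:ℝ) + 1) / ((L2:ℝ) + (s':ℝ) + 1) := by positivity
  have hr2 : ((L2:ℝ) + 1) / ((L2:ℝ) + (s':ℝ) + 1) ≤ 1 := by
    rw [div_le_one (by positivity)]
    have : (0:ℝ) ≤ (s':ℝ) := Nat.cast_nonneg s'
    linarith
  have hpmf : (Nat.choose (L2 + 2 * s') s' : ℝ) * p ^ s' * (1 - p) ^ (L2 + s') ≤ 1 := by
    have h := binom_term_le_one' (L2 + 2 * s') s' (by omega) hp0.le (by linarith)
    have hsub : L2 + 2 * s' - s' = L2 + s' := by omega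
    rwa [hsub] at h
  have hB2pack : ∃ b2 : ℝ, fLP L2 s' p = (p / (1 - p)) ^ (L2 + 1) + b2 ∧ 0 ≤ b2 ∧
      b2 ≤ (p / (1 - p)) ^ L2 := by
    refine ⟨(Nat.choose (L2 + 2 * s') s' : ℝ) * ((L2 + 1 : ℝ) / (L2 + s' + 1)) * p ^ (L2 + s') *
      (1 - p) ^ s' * (1 - p / (1 - p)), rfl, ?_, ?_⟩
    · have c0 : (0:ℝ) ≤ (Nat.choose (L2 + 2 * s') s' : ℝ) := Nat.cast_nonneg _
      exact mul_nonneg (mul_nonneg (mul_nonneg (mul_nonneg c0 hr2nn)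
        (pow_nonneg hp0.le _)) (pow_nonneg hq0.le _)) hm0
    · have hrm : ((L2:ℝ) + 1) / ((L2:ℝ) + (s':ℝ) + 1) * (1 - p / (1 - p)) ≤ 1 :=
        mul_le_one₀ hr2 hm0 hm1
      have hcpq : 0 ≤ (Nat.choose (L2 + 2 * s') s' : ℝ) * p ^ (L2 + s') * (1 - p) ^ s' :=
        mul_nonneg (mul_nonneg (Nat.cast_nonneg _) (pow_nonneg hp0.le _)) (pow_nonneg hq0.le _)
      have hqL2 : ((1:ℝ) - p) ^ L2 ≠ 0 := pow_ne_zero _ (ne_of_gt hq0)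
      calc (Nat.choose (L2 + 2 * s') s' : ℝ) * ((L2 + 1 : ℝ) / (L2 + s' + 1)) * p ^ (L2 + s') *
            (1 - p) ^ s' * (1 - p / (1 - p))
          = ((Nat.choose (L2 + 2 * s') s' : ℝ) * p ^ (L2 + s') * (1 - p) ^ s') *
            (((L2:ℝ) + 1) / ((L2:ℝ) + (s':ℝ) + 1) * (1 - p / (1 - p))) := by push_cast; ring
        _ ≤ ((Nat.choose (L2 + 2 * s') s' : ℝ) * p ^ (L2 + s') * (1 - p) ^ s') * 1 :=
            mul_le_mul_of_nonneg_left hrm hcpq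
        _ = (Nat.choose (L2 + 2 * s') s' : ℝ) * p ^ (L2 + s') * (1 - p) ^ s' := mul_one _
        _ = ((Nat.choose (L2 + 2 * s') s' : ℝ) * p ^ s' * (1 - p) ^ (L2 + s')) *
            ((p / (1 - p)) ^ L2) := by
            rw [div_pow, pow_add, pow_add]
            field_simp
        _ ≤ 1 * ((p / (1 - p)) ^ L2) := mul_le_mul_of_nonneg_right hpmf (pow_nonneg hαnn _)
        _ = (p / (1 - p)) ^ L2 := one_mul _
  obtain ⟨b1, e1, hb1nn, hb1le⟩ := hB1pack
  obtain ⟨b2, e2, hb2nn, hb2le⟩ := hB2pack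
  have ha1nn : 0 ≤ (p / (1 - p)) ^ (L1 + 1) := pow_nonneg hαnn _
  have ha2nn : 0 ≤ (p / (1 - p)) ^ (L2 + 1) := pow_nonneg hαnn _
  -- four term bounds
  have hT1 : (p / (1 - p)) ^ (L1 + 1) * (p / (1 - p)) ^ (L2 + 1) ≤ 55 * p ^ (2 * t + 2) := by
    rw [← pow_add, h2t2, div_eq_mul_one_div, mul_pow]
    calc p ^ (2 * t + 2) * (1 / (1 - p)) ^ (2 * t + 2) ≤ p ^ (2 * t + 2) * 55 :=
          mul_le_mul_of_nonneg_left hbeta (pow_nonneg hp0.le _)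
      _ = 55 * p ^ (2 * t + 2) := by ring
  have hT2 : (p / (1 - p)) ^ (L1 + 1) * b2 ≤ 55 * p ^ (2 * t + 1) := by
    calc (p / (1 - p)) ^ (L1 + 1) * b2 ≤ (p / (1 - p)) ^ (L1 + 1) * (p / (1 - p)) ^ L2 :=
          mul_le_mul_of_nonneg_left hb2le ha1nn
      _ = (p / (1 - p)) ^ (2 * t + 1) := by rw [← pow_add, h2t1]
      _ = p ^ (2 * t + 1) * (1 / (1 - p)) ^ (2 * t + 1) := by
          rw [div_eq_mul_one_div, mul_pow]
      _ ≤ p ^ (2 * t + 1) * 55 :=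
          mul_le_mul_of_nonneg_left (hβmono _ (by omega)) (pow_nonneg hp0.le _)
      _ = 55 * p ^ (2 * t + 1) := by ring
  have hT3 : b1 * (p / (1 - p)) ^ (L2 + 1) ≤ 0.385 * p ^ (2 * t + 1) := by
    calc b1 * (p / (1 - p)) ^ (L2 + 1) ≤ (0.007 * p ^ L1) * (p / (1 - p)) ^ (L2 + 1) :=
          mul_le_mul_of_nonneg_right hb1le ha2nn
      _ = 0.007 * ((p ^ L1 * p ^ (L2 + 1)) * (1 / (1 - p)) ^ (L2 + 1)) := by
          rw [div_eq_mul_one_div, mul_pow]; ring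
      _ = 0.007 * (p ^ (2 * t + 1) * (1 / (1 - p)) ^ (L2 + 1)) := by rw [← pow_add, h2t1']
      _ ≤ 0.007 * (p ^ (2 * t + 1) * 55) := by
          refine mul_le_mul_of_nonneg_left ?_ (by norm_num)
          exact mul_le_mul_of_nonneg_left (hβmono _ (by omega)) (pow_nonneg hp0.le _)
      _ = 0.385 * p ^ (2 * t + 1) := by ring
  have hT4 : b1 * b2 ≤ 0.385 * p ^ (2 * t) := by
    have h1 : b1 * b2 ≤ (0.007 * p ^ L1) * ((p / (1 - p)) ^ L2) :=
      mul_le_mul hb1le hb2le hb2nn (mul_nonneg (by norm_num) (pow_nonneg hp0.le _))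
    calc b1 * b2 ≤ (0.007 * p ^ L1) * ((p / (1 - p)) ^ L2) := h1
      _ = 0.007 * ((p ^ L1 * p ^ L2) * (1 / (1 - p)) ^ L2) := by
          rw [div_eq_mul_one_div, mul_pow]; ring
      _ = 0.007 * (p ^ (2 * t) * (1 / (1 - p)) ^ L2) := by rw [← pow_add, h2t0]
      _ ≤ 0.007 * (p ^ (2 * t) * 55) := by
          refine mul_le_mul_of_nonneg_left ?_ (by norm_num)
          exact mul_le_mul_of_nonneg_left (hβmono _ (by omega)) (pow_nonneg hp0.le _)
      _ = 0.385 * p ^ (2 * t) := by ring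
  -- power comparisons
  have hP1 : p ^ (2 * t + 1) ≤ ((t:ℝ) + 1) * p ^ (2 * t + 2) := by
    calc p ^ (2 * t + 1) = p ^ (2 * t + 1) * 1 := (mul_one _).symm
      _ ≤ p ^ (2 * t + 1) * (((t:ℝ) + 1) * p) :=
          mul_le_mul_of_nonneg_left h1p (pow_nonneg hp0.le _)
      _ = ((t:ℝ) + 1) * (p ^ (2 * t + 1) * p ^ 1) := by ring
      _ = ((t:ℝ) + 1) * p ^ (2 * t + 2) := by rw [← pow_add]
  have hP0 : p ^ (2 * t) ≤ ((t:ℝ) + 1) ^ 2 * p ^ (2 * t + 2) := by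
    have h2 : (1:ℝ) ≤ (((t:ℝ) + 1) * p) ^ 2 := by
      have := pow_le_pow_left₀ zero_le_one h1p 2
      simpa using this
    calc p ^ (2 * t) = p ^ (2 * t) * 1 := (mul_one _).symm
      _ ≤ p ^ (2 * t) * (((t:ℝ) + 1) * p) ^ 2 :=
          mul_le_mul_of_nonneg_left h2 (pow_nonneg hp0.le _)
      _ = ((t:ℝ) + 1) ^ 2 * (p ^ (2 * t) * p ^ 2) := by ring
      _ = ((t:ℝ) + 1) ^ 2 * p ^ (2 * t + 2) := by rw [← pow_add]
  have hP2pos : 0 < p ^ (2 * t + 2) := pow_pos hp0 _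
  have hcoef : 55 + 55.385 * ((t:ℝ) + 1) + 0.385 * ((t:ℝ) + 1) ^ 2 < 0.99 * (t:ℝ) ^ 2 := by
    linarith [mul_nonneg (by linarith : (0:ℝ) ≤ (t:ℝ) - 200) (by linarith : (0:ℝ) ≤ (t:ℝ))]
  have hμ : (t:ℝ) * p ^ (t + 1) ≤ ((t:ℝ) + 2) * p ^ (t + 1) * (1 - p) + p ^ (t + 2) := by
    have h2q : (t:ℝ) ≤ ((t:ℝ) + 2) * (1 - p) := by linarith [hpt3, hp0.le]
    have h3 := mul_le_mul_of_nonneg_right h2q (pow_nonneg hp0.le (t + 1))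
    have h4 : (0:ℝ) ≤ p ^ (t + 2) := pow_nonneg hp0.le _
    linarith [h3, h4]
  have hμnn : 0 ≤ (t:ℝ) * p ^ (t + 1) :=
    mul_nonneg (Nat.cast_nonneg t) (pow_nonneg hp0.le _)
  have hsq : ((t:ℝ) * p ^ (t + 1)) ^ 2 = (t:ℝ) ^ 2 * p ^ (2 * t + 2) := by
    rw [mul_pow, ← pow_mul, show (t + 1) * 2 = 2 * t + 2 from by omega]
  have hfin : 0.99 * ((t:ℝ) ^ 2 * p ^ (2 * t + 2)) ≤
      0.99 * (((t:ℝ) + 2) * p ^ (t + 1) * (1 - p) + p ^ (t + 2)) ^ 2 := by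
    have h := pow_le_pow_left₀ hμnn hμ 2
    rw [hsq] at h
    linarith
  rw [e1, e2]
  calc ((p / (1 - p)) ^ (L1 + 1) + b1) * ((p / (1 - p)) ^ (L2 + 1) + b2)
      = (p / (1 - p)) ^ (L1 + 1) * (p / (1 - p)) ^ (L2 + 1) +
        (p / (1 - p)) ^ (L1 + 1) * b2 + b1 * (p / (1 - p)) ^ (L2 + 1) + b1 * b2 := by ring
    _ ≤ 55 * p ^ (2 * t + 2) + 55 * p ^ (2 * t + 1) + 0.385 * p ^ (2 * t + 1) +
        0.385 * p ^ (2 * t) := add_le_add (add_le_add (add_le_add hT1 hT2) hT3) hT4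
    _ ≤ (55 + 55.385 * ((t:ℝ) + 1) + 0.385 * ((t:ℝ) + 1) ^ 2) * p ^ (2 * t + 2) := by
        linarith [hP1, hP0]
    _ < (0.99 * (t:ℝ) ^ 2) * p ^ (2 * t + 2) := mul_lt_mul_of_pos_right hcoef hP2pos
    _ = 0.99 * ((t:ℝ) ^ 2 * p ^ (2 * t + 2)) := by ring
    _ ≤ 0.99 * (((t:ℝ) + 2) * p ^ (t + 1) * (1 - p) + p ^ (t + 2)) ^ 2 := hfin
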